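/- Let 𝓡 be a finite set of axis-aligned rectangles, each containing at least one point of P. Suppose S ⊆ 𝓡 is independent and has maximum weight among all independent subsets of 𝓡, i.e. W(S) ≥ W(S') for every independent S' ⊆ 𝓡. Then (1) S covers the maximum number of points of P among all independent subsets of 𝓡, i.e. |P_S| ≥ |P_{S'}| for every independent S' ⊆ 𝓡, and (2) S has minimum cardinality among all independent subsets S' ⊆ 𝓡 with |P_{S'}| = |P_S|. -/

import Mathlib

noncomputable section
open scoped Classical

/-- An axis-aligned rectangle: a closed box `Set.Icc a b` in `ℝ × ℝ`
(with respect to the coordinatewise order). -/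
def IsRect (R : Set (ℝ × ℝ)) : Prop := ∃ a b : ℝ × ℝ, R = Set.Icc a b

/-- `cnt P R` = |R|, the number of points of `P` contained in `R`. -/
def cnt (P : Finset (ℝ × ℝ)) (R : Set (ℝ × ℝ)) : ℕ :=
  ((P : Set (ℝ × ℝ)) ∩ R).ncard

/-- `covered P S` = |P_S|, the number of points of `P` covered by some rectangle of `S`. -/
def covered (P : Finset (ℝ × ℝ)) (S : Finset (Set (ℝ × ℝ))) : ℕ :=
  ((P : Set (ℝ × ℝ)) ∩ ⋃ R ∈ S, R).ncard

/-- `weight P S` = W(S) = ∑_{R ∈ S} (2n·|R| − 1), where n = |P|. -/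
def weight (P : Finset (ℝ × ℝ)) (S : Finset (Set (ℝ × ℝ))) : ℤ :=
  ∑ R ∈ S, (2 * (P.card : ℤ) * (cnt P R : ℤ) - 1)

/-- A family of rectangles is independent if its members are pairwise disjoint as sets. -/
def Indep (S : Finset (Set (ℝ × ℝ))) : Prop :=
  ∀ R ∈ S, ∀ R' ∈ S, R ≠ R' → Disjoint R R'

lemma cnt_eq_filter (P : Finset (ℝ × ℝ)) (R : Set (ℝ × ℝ)) :
    cnt P R = (P.filter (· ∈ R)).card := by
  rw [cnt, ← Set.ncard_coe_finset]
  congr 1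
  ext p
  simp [Finset.mem_filter, Set.mem_inter_iff]

lemma covered_eq_filter (P : Finset (ℝ × ℝ)) (S : Finset (Set (ℝ × ℝ))) :
    covered P S = (P.filter (fun p => ∃ R ∈ S, p ∈ R)).card := by
  rw [covered, ← Set.ncard_coe_finset]
  congr 1
  ext p
  simp [Finset.mem_filter, Set.mem_inter_iff]

lemma covered_eq_sum (P : Finset (ℝ × ℝ)) (S : Finset (Set (ℝ × ℝ)))
    (hind : Indep S) : covered P S = ∑ R ∈ S, cnt P R := by
  rw [covered_eq_filter]
  have : P.filter (fun p => ∃ R ∈ S, p ∈ R) = S.biUnion (fun R => P.filter (· ∈ R)) := by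
    ext p
    simp [Finset.mem_biUnion, Finset.mem_filter]
    tauto
  rw [this, Finset.card_biUnion]
  · simp [cnt_eq_filter]
  · intro R hR R' hR' hne
    have hd := hind R hR R' hR' hne
    rw [Function.onFun, Finset.disjoint_left]
    intro p hp hp'
    simp only [Finset.mem_filter] at hp hp'
    exact hd.ne_of_mem hp.2 hp'.2 rfl

lemma weight_eq (P : Finset (ℝ × ℝ)) (S : Finset (Set (ℝ × ℝ))) (hind : Indep S) :
    weight P S = 2 * (P.card : ℤ) * (covered P S : ℤ) - S.card := by
  rw [weight, covered_eq_sum P S hind]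
  push_cast
  rw [Finset.sum_sub_distrib, ← Finset.mul_sum]
  simp

lemma card_le_covered (P : Finset (ℝ × ℝ)) (S : Finset (Set (ℝ × ℝ)))
    (hind : Indep S) (hpt : ∀ R ∈ S, ∃ p ∈ P, p ∈ R) :
    S.card ≤ covered P S := by
  rw [covered_eq_sum P S hind]
  calc S.card = ∑ _R ∈ S, 1 := by simp
    _ ≤ ∑ R ∈ S, cnt P R := by
        apply Finset.sum_le_sum
        intro R hR
        obtain ⟨p, hp, hpR⟩ := hpt R hR
        have : p ∈ P.filter (· ∈ R) := Finset.mem_filter.2 ⟨hp, hpR⟩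
        rw [cnt_eq_filter]
        exact Finset.card_pos.2 ⟨p, this⟩

lemma covered_le_card (P : Finset (ℝ × ℝ)) (S : Finset (Set (ℝ × ℝ))) :
    covered P S ≤ P.card := by
  rw [covered_eq_filter]; exact Finset.card_filter_le _ _

/-- If `S` ⊆ 𝓡 is independent and has maximum weight among all independent
subsets of 𝓡, then (1) `S` covers the maximum number of points of `P` among all independent
subsets of 𝓡, and (2) `S` has minimum cardinality among all independent subsets `S'` ⊆ 𝓡
with |P_{S'}| = |P_S|. -/
theorem stmt_5 (P : Finset (ℝ × ℝ)) (𝓡 : Finset (Set (ℝ × ℝ)))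
    (hrect : ∀ R ∈ 𝓡, IsRect R) (hpt : ∀ R ∈ 𝓡, ∃ p ∈ P, p ∈ R)
    (S : Finset (Set (ℝ × ℝ))) (hsub : S ⊆ 𝓡) (hind : Indep S)
    (hmaxw : ∀ S' ⊆ 𝓡, Indep S' → weight P S' ≤ weight P S) :
    (∀ S' ⊆ 𝓡, Indep S' → covered P S' ≤ covered P S) ∧
    (∀ S' ⊆ 𝓡, Indep S' → covered P S' = covered P S → S.card ≤ S'.card) := by
  have key : ∀ S' ⊆ 𝓡, Indep S' → covered P S' ≤ covered P S := by
    intro S' hS' hind'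
    by_contra h
    push_neg at h
    have hw := hmaxw S' hS' hind'
    rw [weight_eq P S hind, weight_eq P S' hind'] at hw
    have h1 : S'.card ≤ covered P S' := card_le_covered P S' hind'
      (fun R hR => hpt R (hS' hR))
    have h2 : covered P S' ≤ P.card := covered_le_card P S'
    have h3 : (covered P S : ℤ) + 1 ≤ covered P S' := by exact_mod_cast h
    have hn : (1 : ℤ) ≤ P.card := by
      have : 1 ≤ covered P S' := lt_of_le_of_lt (Nat.zero_le _) h
      exact_mod_cast this.trans h2
    nlinarith [Int.ofNat_nonneg S.card, (show (S'.card : ℤ) ≤ P.card by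
      exact_mod_cast h1.trans h2)]
  refine ⟨key, ?_⟩
  intro S' hS' hind' hcov
  have hw := hmaxw S' hS' hind'
  rw [weight_eq P S hind, weight_eq P S' hind', hcov] at hw
  omega
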